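/- Let N be an even positive integer with N ≥ 4 and let ν be a real root of U'_{N+1}(x). For k = 1,…,N let z_k(ν) = (−1)^{k−1}( U_{k−1}(ν)U_k(ν) − U_{N−k}(ν)U_{N−k+1}(ν) + ((N+1−2k)/(N+1)) U_N(ν)U_{N+1}(ν) ). Then for every k = 1,…,N/2 − 1, z_{k+1}(ν) − z_k(ν) = (−1)^k · 2ν · U_{N+1}(ν) · ( ((N−2k)/(N+2))·U_{N+1}(ν) − U_{N−2k−1}(ν) ). -/

import Mathlib

open Polynomial Polynomial.Chebyshev

/-- Evaluation of the Chebyshev polynomial of the second kind. -/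
noncomputable def Ucheb (n : ℤ) (x : ℝ) : ℝ := (Polynomial.Chebyshev.U ℝ n).eval x

/-- Evaluation of the derivative of the Chebyshev polynomial of the second kind. -/
noncomputable def Ucheb' (n : ℤ) (x : ℝ) : ℝ :=
  (Polynomial.derivative (Polynomial.Chebyshev.U ℝ n)).eval x

/-- The k-th coordinate (1-based) of the vector Z(x). -/
noncomputable def zCoord (N k : ℕ) (x : ℝ) : ℝ :=
  (-1 : ℝ) ^ (k - 1) *
    (Ucheb ((k : ℤ) - 1) x * Ucheb (k : ℤ) x
      - Ucheb ((N : ℤ) - k) x * Ucheb ((N : ℤ) - k + 1) x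
      + (((N : ℝ) + 1 - 2 * k) / ((N : ℝ) + 1)) * Ucheb (N : ℤ) x * Ucheb ((N : ℤ) + 1) x)

lemma Ucheb_add_two (x : ℝ) (n : ℤ) :
    Ucheb (n + 2) x = 2 * x * Ucheb (n + 1) x - Ucheb n x := by
  simp [Ucheb, Polynomial.Chebyshev.U_add_two]

lemma Ucheb_zero (x : ℝ) : Ucheb 0 x = 1 := by simp [Ucheb]

lemma Ucheb_one (x : ℝ) : Ucheb 1 x = 2 * x := by
  simp [Ucheb, Polynomial.Chebyshev.U_one]

lemma Ucheb_neg_one (x : ℝ) : Ucheb (-1) x = 0 := by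
  simp [Ucheb, Polynomial.Chebyshev.U_neg_one]

lemma Ucheb_neg_sub_two (x : ℝ) (n : ℤ) : Ucheb (-n - 2) x = -Ucheb n x := by
  simp [Ucheb, Polynomial.Chebyshev.U_neg_sub_two]

lemma uE (x : ℝ) : ∀ b a : ℤ,
    Ucheb a x * Ucheb (b + 1) x - Ucheb (a + 1) x * Ucheb b x = Ucheb (a - b - 1) x := by
  intro b
  induction b using Int.induction_on with
  | zero =>
    intro a
    have h := Ucheb_add_two x (a - 1)
    rw [show a - 1 + 2 = a + 1 by ring, show a - 1 + 1 = a by ring] at h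
    rw [show (0:ℤ) + 1 = 1 by ring, show a - 0 - 1 = a - 1 by ring, Ucheb_zero, Ucheb_one]
    linear_combination -h
  | succ k ih =>
    intro a
    have h1 := Ucheb_add_two x (k : ℤ)
    have h2 := Ucheb_add_two x (a - 1)
    rw [show a - 1 + 2 = a + 1 by ring, show a - 1 + 1 = a by ring] at h2
    have ih' := ih (a - 1)
    rw [show a - 1 + 1 = a by ring, show a - 1 - (k:ℤ) - 1 = a - ((k:ℤ) + 1) - 1 by ring] at ih'
    rw [show ((k:ℤ) + 1 + 1) = (k:ℤ) + 2 by ring]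
    linear_combination Ucheb a x * h1 - Ucheb ((k:ℤ) + 1) x * h2 + ih'
  | pred k ih =>
    intro a
    have h1 := Ucheb_add_two x (-(k:ℤ) - 1)
    rw [show -(k:ℤ) - 1 + 2 = -(k:ℤ) + 1 by ring, show -(k:ℤ) - 1 + 1 = -(k:ℤ) by ring] at h1
    have h2 := Ucheb_add_two x a
    have ih' := ih (a + 1)
    rw [show a + 1 - (-(k:ℤ)) - 1 = a - (-(k:ℤ) - 1) - 1 by ring,
      show a + 1 + 1 = a + 2 by ring] at ih'
    rw [show -(k:ℤ) - 1 + 1 = -(k:ℤ) by ring]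
    linear_combination -Ucheb (a+1) x * h1 + Ucheb (-(k:ℤ)) x * h2 + ih'

lemma uG (x : ℝ) : ∀ c d : ℤ,
    Ucheb c x * Ucheb d x - Ucheb (c - 1) x * Ucheb (d - 1) x = Ucheb (c + d) x := by
  intro c
  induction c using Int.induction_on with
  | zero =>
    intro d
    rw [show (0:ℤ) - 1 = -1 by ring, Ucheb_zero, Ucheb_neg_one, show (0:ℤ) + d = d by ring]
    ring
  | succ k ih =>
    intro d
    have h1 := Ucheb_add_two x ((k:ℤ) - 1)
    rw [show (k:ℤ) - 1 + 2 = (k:ℤ) + 1 by ring, show (k:ℤ) - 1 + 1 = (k:ℤ) by ring] at h1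
    have h2 := Ucheb_add_two x (d - 1)
    rw [show d - 1 + 2 = d + 1 by ring, show d - 1 + 1 = d by ring] at h2
    have ih' := ih (d + 1)
    rw [show (k:ℤ) + (d + 1) = (k:ℤ) + 1 + d by ring, show d + 1 - 1 = d by ring] at ih'
    rw [show (k:ℤ) + 1 - 1 = (k:ℤ) by ring]
    linear_combination Ucheb d x * h1 - Ucheb (k:ℤ) x * h2 + ih'
  | pred k ih =>
    intro d
    have h1 := Ucheb_add_two x (-(k:ℤ) - 2)
    rw [show -(k:ℤ) - 2 + 2 = -(k:ℤ) by ring, show -(k:ℤ) - 2 + 1 = -(k:ℤ) - 1 by ring] at h1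
    have h2 := Ucheb_add_two x (d - 2)
    rw [show d - 2 + 2 = d by ring, show d - 2 + 1 = d - 1 by ring] at h2
    have ih' := ih (d - 1)
    rw [show -(k:ℤ) + (d - 1) = -(k:ℤ) - 1 + d by ring,
      show d - 1 - 1 = d - 2 by ring] at ih'
    rw [show -(k:ℤ) - 1 - 1 = -(k:ℤ) - 2 by ring]
    linear_combination -Ucheb (d - 1) x * h1 + Ucheb (-(k:ℤ) - 1) x * h2 + ih'

lemma uF (x : ℝ) : ∀ c a b : ℤ,
    Ucheb a x * Ucheb b x - Ucheb (a + c) x * Ucheb (b - c) x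
      = Ucheb (c - 1) x * Ucheb (a - b + c - 1) x := by
  intro c
  induction c using Int.induction_on with
  | zero =>
    intro a b
    rw [show a + 0 = a by ring, show b - 0 = b by ring, show (0:ℤ) - 1 = -1 by ring,
      Ucheb_neg_one]
    ring
  | succ k ih =>
    intro a b
    have ihab := ih a b
    have hE := uE x (b - (k:ℤ) - 1) (a + (k:ℤ))
    rw [show b - (k:ℤ) - 1 + 1 = b - (k:ℤ) by ring,
      show a + (k:ℤ) - (b - (k:ℤ) - 1) - 1 = a - b + 2 * (k:ℤ) by ring] at hE
    have hG := uG x (k:ℤ) (a - b + (k:ℤ))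
    rw [show (k:ℤ) + (a - b + (k:ℤ)) = a - b + 2 * (k:ℤ) by ring,
      show a - b + (k:ℤ) - 1 = a - b + (k:ℤ) - 1 by rfl] at hG
    rw [show a + ((k:ℤ) + 1) = a + (k:ℤ) + 1 by ring,
      show b - ((k:ℤ) + 1) = b - (k:ℤ) - 1 by ring,
      show ((k:ℤ) + 1) - 1 = (k:ℤ) by ring,
      show a - b + ((k:ℤ) + 1) - 1 = a - b + (k:ℤ) by ring]
    linear_combination ihab + hE - hG
  | pred k ih =>
    intro a b
    have ihab := ih a b
    rw [show a + -(k:ℤ) = a - (k:ℤ) by ring, show b - -(k:ℤ) = b + (k:ℤ) by ring,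
      show a - b + -(k:ℤ) - 1 = a - b - (k:ℤ) - 1 by ring] at ihab
    have hE := uE x (b + (k:ℤ)) (a - (k:ℤ) - 1)
    rw [show a - (k:ℤ) - 1 + 1 = a - (k:ℤ) by ring,
      show a - (k:ℤ) - 1 - (b + (k:ℤ)) - 1 = a - b - 2 * (k:ℤ) - 2 by ring] at hE
    have hG := uG x (-(k:ℤ) - 1) (a - b - (k:ℤ) - 1)
    rw [show (-(k:ℤ) - 1) + (a - b - (k:ℤ) - 1) = a - b - 2 * (k:ℤ) - 2 by ring,
      show (-(k:ℤ) - 1) - 1 = -(k:ℤ) - 2 by ring,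
      show a - b - (k:ℤ) - 1 - 1 = a - b - (k:ℤ) - 2 by ring] at hG
    rw [show a + (-(k:ℤ) - 1) = a - (k:ℤ) - 1 by ring,
      show b - (-(k:ℤ) - 1) = b + (k:ℤ) + 1 by ring,
      show (-(k:ℤ) - 1) - 1 = -(k:ℤ) - 2 by ring,
      show a - b + (-(k:ℤ) - 1) - 1 = a - b - (k:ℤ) - 2 by ring]
    -- goal: u a u b - u(a-k-1) u(b+k+1) = u(-k-2) u(a-b-k-2)
    -- ihab : u a u b - u(a-k) u(b+k) = u(-k-1) u(a-b-k-1)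
    -- hE : u(a-k-1) u(b+k+1) - u(a-k) u(b+k) = u(a-b-2k-2)
    -- hG : u(-k-1) u(a-b-k-1) - u(-k-2) u(a-b-k-2) = u(a-b-2k-2)
    linear_combination ihab - hE + hG

lemma Ucheb_key (N : ℕ) (ν : ℝ) (h : Ucheb' ((N:ℤ) + 1) ν = 0) :
    ((N:ℝ) + 2) * Ucheb (N:ℤ) ν = ((N:ℝ) + 1) * ν * Ucheb ((N:ℤ) + 1) ν := by
  have h1 := congrArg (Polynomial.eval ν)
    (Polynomial.Chebyshev.add_one_mul_T_eq_poly_in_U (R := ℝ) ((N:ℤ) + 1))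
  have h2 := congrArg (Polynomial.eval ν)
    (Polynomial.Chebyshev.T_eq_U_sub_X_mul_U (R := ℝ) ((N:ℤ) + 2))
  rw [show ((N:ℤ) + 1 + 1) = (N:ℤ) + 2 by ring] at h1
  rw [show ((N:ℤ) + 2 - 1) = (N:ℤ) + 1 by ring] at h2
  simp only [Polynomial.eval_sub, Polynomial.eval_mul, Polynomial.eval_add, Polynomial.eval_one,
    Polynomial.eval_X, Polynomial.eval_pow, Polynomial.eval_intCast, Polynomial.eval_ofNat] at h1 h2
  have hrec := Ucheb_add_two ν (N:ℤ)
  unfold Ucheb' at h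
  unfold Ucheb at hrec ⊢
  push_cast at h1 ⊢
  linear_combination -h1 + ((N:ℝ) + 2) * h2 + ((N:ℝ) + 2) * hrec + (1 - ν^2) * h

theorem stmt12 (N : ℕ) (hN : 4 ≤ N) (hNeven : Even N)
    (ν : ℝ) (hνroot : Ucheb' (N + 1) ν = 0) :
    ∀ k : ℕ, 1 ≤ k → k ≤ N / 2 - 1 →
      zCoord N (k + 1) ν - zCoord N k ν
        = (-1 : ℝ) ^ k * 2 * ν * Ucheb ((N : ℤ) + 1) ν *
            ((((N : ℝ) - 2 * k) / ((N : ℝ) + 2)) * Ucheb ((N : ℤ) + 1) ν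
              - Ucheb ((N : ℤ) - 2 * k - 1) ν) := by
  intro k hk1 hk2
  have hN1 : ((N:ℝ) + 1) ≠ 0 := by positivity
  have hN2 : ((N:ℝ) + 2) ≠ 0 := by positivity
  have key := Ucheb_key N ν hνroot
  have hscal : (((N:ℝ) - 2 * k) / ((N:ℝ) + 1)) * Ucheb (N:ℤ) ν
      = ν * (((N:ℝ) - 2 * k) / ((N:ℝ) + 2)) * Ucheb ((N:ℤ) + 1) ν := by
    field_simp
    linear_combination ((N:ℝ) - 2 * k) * key
  have hpow : (-1 : ℝ) ^ (k - 1) = -(-1 : ℝ) ^ k := by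
    obtain ⟨j, rfl⟩ := Nat.exists_eq_add_of_le hk1
    rw [Nat.add_sub_cancel_left, pow_add]
    ring
  have hr1 := Ucheb_add_two ν ((k:ℤ) - 1)
  rw [show (k:ℤ) - 1 + 2 = (k:ℤ) + 1 by ring, show (k:ℤ) - 1 + 1 = (k:ℤ) by ring] at hr1
  have hr2 := Ucheb_add_two ν ((N:ℤ) - k - 1)
  rw [show (N:ℤ) - k - 1 + 2 = (N:ℤ) - k + 1 by ring,
    show (N:ℤ) - k - 1 + 1 = (N:ℤ) - k by ring] at hr2
  have hf := uF ν ((N:ℤ) - k + 1) (k:ℤ) (k:ℤ)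
  rw [show (k:ℤ) + ((N:ℤ) - k + 1) = (N:ℤ) + 1 by ring,
    show (k:ℤ) - ((N:ℤ) - k + 1) = -((N:ℤ) - 2 * k - 1) - 2 by ring,
    Ucheb_neg_sub_two,
    show ((N:ℤ) - k + 1) - 1 = (N:ℤ) - k by ring,
    show (k:ℤ) - k + ((N:ℤ) - k + 1) - 1 = (N:ℤ) - k by ring] at hf
  unfold zCoord
  rw [Nat.add_sub_cancel, hpow]
  push_cast
  rw [show (N:ℤ) - ((k:ℤ) + 1) + 1 = (N:ℤ) - k by ring,
    show (N:ℤ) - ((k:ℤ) + 1) = (N:ℤ) - k - 1 by ring,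
    show (k:ℤ) + 1 - 1 = (k:ℤ) by ring]
  linear_combination (-1:ℝ)^k * Ucheb (k:ℤ) ν * hr1 - (-1:ℝ)^k * Ucheb ((N:ℤ) - k) ν * hr2
    + 2 * ν * (-1:ℝ)^k * hf + 2 * (-1:ℝ)^k * Ucheb ((N:ℤ) + 1) ν * hscal
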